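/- Let m ≥ 2, let C* > 0, and let μ = (μ_1, …, μ_m) ∈ ℝ^m with μ_1 = max_i μ_i. Assume 0 < σ_1(μ) ≤ C* and μ_1 > C*. Then σ_2(μ) ≤ C* μ_1 − (m/(2(m−1))) μ_1². -/

import Mathlib

open Finset


lemma sq_sum_eq {m : ℕ} (f : Fin m → ℝ) :
    (∑ i, f i) ^ 2 = ∑ i, f i ^ 2 +
      2 * ∑ i, ∑ j ∈ Finset.univ.filter (fun j => i < j), f i * f j := by
  have e1 : ∀ P : Fin m → Fin m → Prop, ∀ _ : DecidablePred fun p : Fin m × Fin m => P p.1 p.2,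
      True := fun _ _ => trivial
  have key : (∑ i, f i) ^ 2 = ∑ i, ∑ j, f i * f j := by
    rw [sq, Finset.sum_mul_sum]
  rw [key]
  have split : ∀ i : Fin m, ∑ j, f i * f j
      = (∑ j, if i < j then f i * f j else 0)
        + (∑ j, if j < i then f i * f j else 0) + f i ^ 2 := by
    intro i
    rw [← Finset.sum_add_distrib]
    have : f i ^ 2 = ∑ j, if j = i then f i * f j else 0 := by
      rw [Finset.sum_ite_eq' univ i fun j => f i * f j]
      simp [sq]
    rw [this, ← Finset.sum_add_distrib]
    refine Finset.sum_congr rfl fun j _ => ?_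
    rcases lt_trichotomy i j with h | h | h
    · simp [h, not_lt.2 h.le]
      intro hj; exact absurd hj.symm h.ne
    · simp [h, lt_irrefl]
    · have : ¬ i < j := not_lt.2 h.le
      simp [this, h, h.ne]
  rw [Finset.sum_congr rfl fun i _ => split i]
  have swap : (∑ i, ∑ j, if (j:Fin m) < i then f i * f j else 0)
      = ∑ i, ∑ j, if i < j then f i * f j else 0 := by
    rw [Finset.sum_comm]
    refine Finset.sum_congr rfl fun i _ => Finset.sum_congr rfl fun j _ => ?_
    by_cases h : i < j <;> simp [h, mul_comm]
  have filt : ∀ i : Fin m, (∑ j, if i < j then f i * f j else 0)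
      = ∑ j ∈ Finset.univ.filter (fun j => i < j), f i * f j := by
    intro i; rw [Finset.sum_filter]
  simp only [Finset.sum_add_distrib, swap]
  simp only [filt]
  ring


/-- **Quadratic upper bound for `σ₂` when the maximal entry exceeds `C*`.**
Let `m ≥ 2`, `C* > 0`, and let `μ ∈ ℝ^m` with `μ₁ = maxᵢ μᵢ`.  If `0 < σ₁(μ) ≤ C*`
and `μ₁ > C*`, then `σ₂(μ) ≤ C* μ₁ − (m/(2(m−1))) μ₁²`. -/
theorem stmt_10 (m : ℕ) (hm : 2 ≤ m) (Cs : ℝ) (hCs : 0 < Cs) (μ : Fin m → ℝ)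
    (hmax : ∀ i, μ i ≤ μ ⟨0, by omega⟩)
    (h1 : 0 < ∑ i, μ i) (h2 : ∑ i, μ i ≤ Cs)
    (h3 : Cs < μ ⟨0, by omega⟩) :
    ∑ i, ∑ j ∈ Finset.univ.filter (fun j => i < j), μ i * μ j ≤
      Cs * μ ⟨0, by omega⟩ -
        ((m : ℝ) / (2 * ((m : ℝ) - 1))) * μ ⟨0, by omega⟩ ^ 2 := by
  set i0 : Fin m := ⟨0, by omega⟩ with hi0
  set S : ℝ := ∑ i, μ i with hS
  set Q : ℝ := ∑ i, μ i ^ 2 with hQ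
  have hid := sq_sum_eq μ
  have hrest : (S - μ i0) ^ 2 ≤ ((m : ℝ) - 1) * (Q - μ i0 ^ 2) := by
    have hc := sq_sum_le_card_mul_sum_sq (s := Finset.univ.erase i0) (f := μ)
    have e1 : ∑ i ∈ Finset.univ.erase i0, μ i = S - μ i0 := by
      rw [hS, ← Finset.add_sum_erase _ μ (Finset.mem_univ i0)]; ring
    have e2 : ∑ i ∈ Finset.univ.erase i0, μ i ^ 2 = Q - μ i0 ^ 2 := by
      rw [hQ, ← Finset.add_sum_erase _ (fun i => μ i ^ 2) (Finset.mem_univ i0)]; ring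
    have e3 : ((Finset.univ.erase i0).card : ℝ) = (m : ℝ) - 1 := by
      rw [Finset.card_erase_of_mem (Finset.mem_univ i0), Finset.card_univ, Fintype.card_fin]
      have : (1:ℕ) ≤ m := by omega
      push_cast [Nat.cast_sub this]; ring
    rw [e1, e2, e3] at hc
    exact hc
  have hm1 : (2:ℝ) ≤ (m:ℝ) := by exact_mod_cast hm
  have hm0 : (0:ℝ) < (m:ℝ) - 1 := by linarith
  have hx0 : Cs < μ i0 := h3
  have hσ : ∑ i, ∑ j ∈ Finset.univ.filter (fun j => i < j), μ i * μ j
      = (S ^ 2 - Q) / 2 := by rw [hid]; ring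
  rw [hσ]
  have key : ((m:ℝ)-1) * (S^2 - Q) ≤ 2*((m:ℝ)-1)*Cs*μ i0 - (m:ℝ)*μ i0^2 := by
    nlinarith [hrest, mul_nonneg (sub_nonneg.2 h2) h1.le,
      mul_nonneg (sub_nonneg.2 hx0.le) hCs.le,
      mul_nonneg (by linarith : (0:ℝ) ≤ (m:ℝ)-2)
        (by nlinarith [mul_nonneg (sub_nonneg.2 h2) h1.le,
              mul_nonneg (sub_nonneg.2 hx0.le) hCs.le] : (0:ℝ) ≤ Cs*μ i0 - S*S)]
  have e : Cs*μ i0 - (m:ℝ)/(2*((m:ℝ)-1))*μ i0^2 - (S^2-Q)/2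
      = (2*((m:ℝ)-1)*Cs*μ i0 - (m:ℝ)*μ i0^2 - ((m:ℝ)-1)*(S^2-Q)) / (2*((m:ℝ)-1)) := by
    field_simp
  have hnum : 0 ≤ (2*((m:ℝ)-1)*Cs*μ i0 - (m:ℝ)*μ i0^2 - ((m:ℝ)-1)*(S^2-Q)) / (2*((m:ℝ)-1)) :=
    div_nonneg (by linarith) (by linarith)
  linarith [e ▸ hnum]
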